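/- Let Σ = B_n in ℝ^n and Θ a union of d chains of simple roots α_i = e_i − e_{i+1}, each chain of length m ≥ 1 (blocks of m+1 consecutive indices), with consecutive blocks separated by exactly one simple root not in Θ and n = d(m+1) (so e_n ∉ span Θ direction, i.e. α_n = e_n ∉ Θ). Let u_1, …, u_d be the block averages. Then the nonzero projections of the roots of B_n onto (span Θ)^⊥ contain the set {±u_i ± u_j (i<j), ±u_i, ±2u_i}, which is a non-reduced root system of type BC_d of rank d. -/

import Mathlib

open scoped RealInnerProductSpace

namespace Stmt19Aux

lemma bound {d m r i : ℕ} (hr : r < d) (hi : i < m + 1) : r * (m+1) + i < d * (m+1) :=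
  calc r * (m+1) + i < r * (m+1) + (m+1) := by omega
  _ = (r+1) * (m+1) := by ring
  _ ≤ d * (m+1) := Nat.mul_le_mul_right _ hr

lemma idx {m r s i j : ℕ} (hi : i < m + 1) (hj : j < m + 1)
    (h : r * (m+1) + i = s * (m+1) + j) : r = s ∧ i = j := by
  have h1 : (r * (m+1) + i) % (m+1) = (s * (m+1) + j) % (m+1) := by rw [h]
  simp only [Nat.add_mod, Nat.mul_mod_left, Nat.zero_add] at h1
  rw [Nat.mod_mod_of_dvd, Nat.mod_mod_of_dvd, Nat.mod_eq_of_lt hi, Nat.mod_eq_of_lt hj] at h1 <;> try rfl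
  subst h1
  have h2 : r * (m+1) = s * (m+1) := by omega
  exact ⟨Nat.eq_of_mul_eq_mul_right (by omega) h2, rfl⟩

lemma inner_e {n : ℕ} (e : ℕ → EuclideanSpace ℝ (Fin n))
    (he : ∀ i, e i = if h : i < n then EuclideanSpace.single (⟨i, h⟩ : Fin n) 1 else 0)
    {i j : ℕ} (hi : i < n) (hj : j < n) :
    ⟪e i, e j⟫ = if i = j then (1:ℝ) else 0 := by
  rw [he i, he j, dif_pos hi, dif_pos hj, EuclideanSpace.inner_single_left]
  simp [EuclideanSpace.single_apply, Fin.ext_iff, eq_comm]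


lemma inner_e_sum {n d m : ℕ} (hn : n = d * (m+1)) (e : ℕ → EuclideanSpace ℝ (Fin n))
    (he : ∀ i, e i = if h : i < n then EuclideanSpace.single (⟨i, h⟩ : Fin n) 1 else 0)
    {s j r : ℕ} (hs : s < d) (hj : j < m+1) (hr : r < d) :
    ⟪e (s*(m+1)+j), ∑ i ∈ Finset.range (m+1), e (r*(m+1)+i)⟫ = if s = r then (1:ℝ) else 0 := by
  rw [inner_sum]
  have key : ∀ i ∈ Finset.range (m+1),
      ⟪e (s*(m+1)+j), e (r*(m+1)+i)⟫ = if s = r ∧ j = i then (1:ℝ) else 0 := by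
    intro i hi
    rw [Finset.mem_range] at hi
    rw [inner_e e he (hn ▸ bound hs hj) (hn ▸ bound hr hi)]
    have hiff : (s*(m+1)+j = r*(m+1)+i) ↔ (s = r ∧ j = i) :=
      ⟨fun h => idx hj hi h, by rintro ⟨rfl, rfl⟩; rfl⟩
    simp [hiff]
  rw [Finset.sum_congr rfl key]
  by_cases hsr : s = r
  · subst hsr
    simp [Finset.sum_ite_eq, Finset.mem_range, hj]
  · simp [hsr]

lemma inner_eu {n d m : ℕ} (hn : n = d * (m+1)) (e : ℕ → EuclideanSpace ℝ (Fin n))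
    (he : ∀ i, e i = if h : i < n then EuclideanSpace.single (⟨i, h⟩ : Fin n) 1 else 0)
    (u : ℕ → EuclideanSpace ℝ (Fin n))
    (hu : ∀ r, u r = ((m : ℝ) + 1)⁻¹ • ∑ i ∈ Finset.range (m + 1), e (r * (m + 1) + i))
    {s j r : ℕ} (hs : s < d) (hj : j < m+1) (hr : r < d) :
    ⟪e (s*(m+1)+j), u r⟫ = if s = r then ((m:ℝ)+1)⁻¹ else 0 := by
  rw [hu r, real_inner_smul_right, inner_e_sum hn e he hs hj hr]
  split_ifs <;> simp

lemma inner_uu {n d m : ℕ} (hn : n = d * (m+1)) (e : ℕ → EuclideanSpace ℝ (Fin n))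
    (he : ∀ i, e i = if h : i < n then EuclideanSpace.single (⟨i, h⟩ : Fin n) 1 else 0)
    (u : ℕ → EuclideanSpace ℝ (Fin n))
    (hu : ∀ r, u r = ((m : ℝ) + 1)⁻¹ • ∑ i ∈ Finset.range (m + 1), e (r * (m + 1) + i))
    {r s : ℕ} (hr : r < d) (hs : s < d) :
    ⟪u r, u s⟫ = if r = s then ((m:ℝ)+1)⁻¹ else 0 := by
  have hm0 : ((m:ℝ)+1) ≠ 0 := by positivity
  rw [hu r, real_inner_smul_left, sum_inner]
  rw [Finset.sum_congr rfl (fun j hj => inner_eu hn e he u hu hr (Finset.mem_range.mp hj) hs)]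
  simp only [Finset.sum_const, Finset.card_range, nsmul_eq_mul]
  split_ifs <;> field_simp <;> push_cast <;> ring


variable {n d m : ℕ}

lemma chain_mem (e : ℕ → EuclideanSpace ℝ (Fin n)) (Θ : Set (EuclideanSpace ℝ (Fin n)))
    (hΘ : Θ = {x | ∃ r i, r < d ∧ i < m ∧ x = e (r*(m+1)+i) - e (r*(m+1)+i+1)})
    {r : ℕ} (hr : r < d) : ∀ i, i < m+1 → e (r*(m+1)) - e (r*(m+1)+i) ∈ Submodule.span ℝ Θ := by
  intro i
  induction i with
  | zero => intro _; simp
  | succ k ih =>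
    intro hk
    have h1 := ih (by omega)
    have h2 : e (r*(m+1)+k) - e (r*(m+1)+k+1) ∈ Θ := by
      rw [hΘ]; exact ⟨r, k, hr, by omega, rfl⟩
    have h3 := Submodule.add_mem _ h1 (Submodule.subset_span h2)
    rwa [sub_add_sub_cancel] at h3

lemma diff_mem (e : ℕ → EuclideanSpace ℝ (Fin n)) (Θ : Set (EuclideanSpace ℝ (Fin n)))
    (hΘ : Θ = {x | ∃ r i, r < d ∧ i < m ∧ x = e (r*(m+1)+i) - e (r*(m+1)+i+1)})
    {r : ℕ} (hr : r < d) {i j : ℕ} (hi : i < m+1) (hj : j < m+1) :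
    e (r*(m+1)+i) - e (r*(m+1)+j) ∈ Submodule.span ℝ Θ := by
  have h1 := chain_mem e Θ hΘ hr i hi
  have h2 := chain_mem e Θ hΘ hr j hj
  have h3 := Submodule.sub_mem _ h2 h1
  rwa [sub_sub_sub_cancel_left] at h3

lemma ek_sub_u_mem (e : ℕ → EuclideanSpace ℝ (Fin n))
    (u : ℕ → EuclideanSpace ℝ (Fin n))
    (hu : ∀ r, u r = ((m : ℝ) + 1)⁻¹ • ∑ i ∈ Finset.range (m + 1), e (r * (m + 1) + i))
    (Θ : Set (EuclideanSpace ℝ (Fin n)))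
    (hΘ : Θ = {x | ∃ r i, r < d ∧ i < m ∧ x = e (r*(m+1)+i) - e (r*(m+1)+i+1)})
    {r : ℕ} (hr : r < d) {i : ℕ} (hi : i < m+1) :
    e (r*(m+1)+i) - u r ∈ Submodule.span ℝ Θ := by
  have hm0 : ((m:ℝ)+1) ≠ 0 := by positivity
  have hid : e (r*(m+1)+i) - u r
      = ((m:ℝ)+1)⁻¹ • ∑ j ∈ Finset.range (m+1), (e (r*(m+1)+i) - e (r*(m+1)+j)) := by
    rw [hu r, Finset.sum_sub_distrib, Finset.sum_const, Finset.card_range, smul_sub]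
    congr 1
    rw [← Nat.cast_smul_eq_nsmul ℝ, smul_smul]
    push_cast
    rw [inv_mul_cancel₀ hm0, one_smul]
  rw [hid]
  exact Submodule.smul_mem _ _ (Submodule.sum_mem _ (fun j hj =>
    diff_mem e Θ hΘ hr hi (Finset.mem_range.mp hj)))

lemma u_mem_perp (hn : n = d * (m+1)) (e : ℕ → EuclideanSpace ℝ (Fin n))
    (he : ∀ i, e i = if h : i < n then EuclideanSpace.single (⟨i, h⟩ : Fin n) 1 else 0)
    (u : ℕ → EuclideanSpace ℝ (Fin n))
    (hu : ∀ r, u r = ((m : ℝ) + 1)⁻¹ • ∑ i ∈ Finset.range (m + 1), e (r * (m + 1) + i))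
    (Θ : Set (EuclideanSpace ℝ (Fin n)))
    (hΘ : Θ = {x | ∃ r i, r < d ∧ i < m ∧ x = e (r*(m+1)+i) - e (r*(m+1)+i+1)})
    {r : ℕ} (hr : r < d) : u r ∈ (Submodule.span ℝ Θ)ᗮ := by
  rw [Submodule.mem_orthogonal]
  intro w hw
  induction hw using Submodule.span_induction with
  | mem w hwΘ =>
    rw [hΘ] at hwΘ
    obtain ⟨s, i, hs, hi, rfl⟩ := hwΘ
    rw [inner_sub_left, inner_eu hn e he u hu hs (by omega) hr]
    have h4 : s*(m+1)+i+1 = s*(m+1)+(i+1) := by omega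
    rw [h4, inner_eu hn e he u hu hs (by omega) hr, sub_self]
  | zero => simp
  | add x y _ _ hx hy => rw [inner_add_left, hx, hy, add_zero]
  | smul a x _ hx => rw [real_inner_smul_left, hx, mul_zero]

lemma proj_e (hn : n = d * (m+1)) (e : ℕ → EuclideanSpace ℝ (Fin n))
    (he : ∀ i, e i = if h : i < n then EuclideanSpace.single (⟨i, h⟩ : Fin n) 1 else 0)
    (u : ℕ → EuclideanSpace ℝ (Fin n))
    (hu : ∀ r, u r = ((m : ℝ) + 1)⁻¹ • ∑ i ∈ Finset.range (m + 1), e (r * (m + 1) + i))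
    (Θ : Set (EuclideanSpace ℝ (Fin n)))
    (hΘ : Θ = {x | ∃ r i, r < d ∧ i < m ∧ x = e (r*(m+1)+i) - e (r*(m+1)+i+1)})
    {r : ℕ} (hr : r < d) {i : ℕ} (hi : i < m+1) :
    (Submodule.orthogonalProjectionOnto ((Submodule.span ℝ Θ)ᗮ) (e (r*(m+1)+i)) :
      EuclideanSpace ℝ (Fin n)) = u r := by
  have h1 : e (r*(m+1)+i) = (e (r*(m+1)+i) - u r) + u r := by abel
  rw [h1, map_add,
    Submodule.orthogonalProjectionOnto_eq_zero_iff.mpr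
      (Submodule.le_orthogonal_orthogonal _ (ek_sub_u_mem e u hu Θ hΘ hr hi))]
  rw [Submodule.coe_add, Submodule.coe_zero, zero_add]
  exact Submodule.starProjection_eq_self_iff.mpr (u_mem_perp hn e he u hu Θ hΘ hr)

end Stmt19Aux
set_option maxHeartbeats 1000000 in
theorem stmt19 (n d m : ℕ) (hm : 1 ≤ m) (hd : 1 ≤ d) (hn : n = d * (m + 1)) :
    ∀ (e : ℕ → EuclideanSpace ℝ (Fin n)),
    (∀ i, e i = if h : i < n then EuclideanSpace.single (⟨i, h⟩ : Fin n) 1 else 0) →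
    ∀ (u : ℕ → EuclideanSpace ℝ (Fin n)),
    (∀ r, u r = ((m : ℝ) + 1)⁻¹ • ∑ i ∈ Finset.range (m + 1), e (r * (m + 1) + i)) →
    ∀ (Θ : Set (EuclideanSpace ℝ (Fin n))),
    Θ = {x | ∃ r i, r < d ∧ i < m ∧
      x = e (r * (m + 1) + i) - e (r * (m + 1) + i + 1)} →
    ∀ (Bn : Set (EuclideanSpace ℝ (Fin n))),
    Bn = {x | (∃ i, i < n ∧ (x = e i ∨ x = -e i)) ∨
      (∃ i j, i < j ∧ j < n ∧
        (x = e i + e j ∨ x = e i - e j ∨ x = -e i + e j ∨ x = -e i - e j))} →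
    ∀ (p : EuclideanSpace ℝ (Fin n) → EuclideanSpace ℝ (Fin n)),
    (∀ x, p x = (Submodule.orthogonalProjectionOnto ((Submodule.span ℝ Θ)ᗮ) x : EuclideanSpace ℝ (Fin n))) →
    ∀ (BC : Set (EuclideanSpace ℝ (Fin n))),
    BC = {x | (∃ r, r < d ∧ (x = u r ∨ x = -u r ∨ x = (2 : ℝ) • u r ∨ x = -((2 : ℝ) • u r))) ∨
      (∃ r s, r < s ∧ s < d ∧
        (x = u r + u s ∨ x = u r - u s ∨ x = -u r + u s ∨ x = -u r - u s))} →
    BC ⊆ (p '' Bn) \ {0} ∧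
    (∀ x ∈ BC, ∀ y ∈ BC, y - (2 * ⟪y, x⟫ / ⟪x, x⟫) • x ∈ BC) ∧
    (∀ x ∈ BC, ∀ y ∈ BC, ∃ z : ℤ, 2 * ⟪x, y⟫ / ⟪y, y⟫ = (z : ℝ)) ∧
    Module.finrank ℝ (Submodule.span ℝ BC) = d := by
  intro e he u hu Θ hΘ Bn hBn p hp BC hBC
  have hm0 : ((m:ℝ)+1) ≠ 0 := by positivity
  set c : ℝ := ((m:ℝ)+1)⁻¹ with hcdef
  have hc0 : c ≠ 0 := inv_ne_zero hm0
  have huu : ∀ {r s : ℕ}, r < d → s < d → ⟪u r, u s⟫ = if r = s then c else 0 :=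
    fun hr hs => Stmt19Aux.inner_uu hn e he u hu hr hs
  -- projection facts
  have hpe : ∀ {r i : ℕ}, r < d → i < m+1 → p (e (r*(m+1)+i)) = u r := by
    intro r i hr hi
    rw [hp]; exact Stmt19Aux.proj_e hn e he u hu Θ hΘ hr hi
  have hpneg : ∀ x, p (-x) = - p x := by intro x; simp [hp]
  have hpadd : ∀ x y, p (x+y) = p x + p y := by intro x y; simp [hp]
  have hpsub : ∀ x y, p (x-y) = p x - p y := by intro x y; simp [hp, map_sub]
  -- membership helpers
  have mem1 : ∀ {t : ℕ}, t < d → ∀ s : ℝ, (s = 1 ∨ s = -1) → s • u t ∈ BC := by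
    intro t ht s hs
    rw [hBC]; left
    refine ⟨t, ht, ?_⟩
    rcases hs with rfl | rfl
    · exact Or.inl (by module)
    · exact Or.inr (Or.inl (by module))
  have mem1' : ∀ {t : ℕ}, t < d → ∀ s : ℝ, (s = 1 ∨ s = -1) → s • ((2:ℝ) • u t) ∈ BC := by
    intro t ht s hs
    rw [hBC]; left
    refine ⟨t, ht, ?_⟩
    rcases hs with rfl | rfl
    · exact Or.inr (Or.inr (Or.inl (by module)))
    · exact Or.inr (Or.inr (Or.inr (by module)))
  have mem2 : ∀ {a b : ℕ}, a < d → b < d → a ≠ b → ∀ s1 s2 : ℝ,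
      (s1 = 1 ∨ s1 = -1) → (s2 = 1 ∨ s2 = -1) → s1 • u a + s2 • u b ∈ BC := by
    intro a b ha hb hab s1 s2 hs1 hs2
    rcases Nat.lt_or_ge a b with h | h
    · rw [hBC]; right
      refine ⟨a, b, h, hb, ?_⟩
      rcases hs1 with rfl | rfl <;> rcases hs2 with rfl | rfl
      · exact Or.inl (by module)
      · exact Or.inr (Or.inl (by module))
      · exact Or.inr (Or.inr (Or.inl (by module)))
      · exact Or.inr (Or.inr (Or.inr (by module)))
    · rw [hBC]; right
      refine ⟨b, a, by omega, ha, ?_⟩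
      rcases hs2 with rfl | rfl <;> rcases hs1 with rfl | rfl
      · exact Or.inl (by module)
      · exact Or.inr (Or.inl (by module))
      · exact Or.inr (Or.inr (Or.inl (by module)))
      · exact Or.inr (Or.inr (Or.inr (by module)))
  refine ⟨?_, ?_, ?_, ?_⟩
  · -- BC ⊆ p '' Bn \ {0}
    intro x hx
    rw [hBC] at hx
    have hnz : ∀ t : ℕ, t < d → ∀ v : EuclideanSpace ℝ (Fin n), ⟪v, u t⟫ ≠ 0 → v ∉ ({0} : Set _) := by
      intro t ht v hv h0
      rw [Set.mem_singleton_iff] at h0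
      rw [h0, inner_zero_left] at hv
      exact hv rfl
    constructor
    · -- in the image
      rw [hBn]
      rcases hx with ⟨r, hr, hx⟩ | ⟨r, s, hrs, hs, hx⟩
      · have h0 : r*(m+1) < n := by
          have := Stmt19Aux.bound (i := 0) hr (Nat.succ_pos m); omega
        have h1 : r*(m+1)+1 < n := by
          have := Stmt19Aux.bound (i := 1) hr (show 1 < m+1 by omega); omega
        have hpe0 : p (e (r*(m+1))) = u r := by
          have := hpe hr (show 0 < m+1 by omega)
          simpa using this
        have hpe1 : p (e (r*(m+1)+1)) = u r := hpe hr (by omega)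
        rcases hx with rfl | rfl | rfl | rfl
        · exact ⟨e (r*(m+1)), Or.inl ⟨r*(m+1), h0, Or.inl rfl⟩, hpe0⟩
        · exact ⟨-e (r*(m+1)), Or.inl ⟨r*(m+1), h0, Or.inr rfl⟩, by rw [hpneg, hpe0]⟩
        · refine ⟨e (r*(m+1)) + e (r*(m+1)+1),
            Or.inr ⟨r*(m+1), r*(m+1)+1, Nat.lt_succ_self _, h1, Or.inl rfl⟩, ?_⟩
          rw [hpadd, hpe0, hpe1]; module
        · refine ⟨-e (r*(m+1)) - e (r*(m+1)+1),
            Or.inr ⟨r*(m+1), r*(m+1)+1, Nat.lt_succ_self _, h1, Or.inr (Or.inr (Or.inr rfl))⟩, ?_⟩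
          rw [hpsub, hpneg, hpe0, hpe1]; module
      · have hr : r < d := lt_trans hrs hs
        have hb0 : r*(m+1) < n := by
          have := Stmt19Aux.bound (i := 0) hr (Nat.succ_pos m); omega
        have hb1 : s*(m+1) < n := by
          have := Stmt19Aux.bound (i := 0) hs (Nat.succ_pos m); omega
        have horder : r*(m+1) < s*(m+1) := by
          have := Nat.mul_le_mul_right (m+1) (show r+1 ≤ s by omega)
          calc r*(m+1) < r*(m+1)+(m+1) := by omega
          _ = (r+1)*(m+1) := by ring
          _ ≤ s*(m+1) := this
        have hpe0 : p (e (r*(m+1))) = u r := by simpa using hpe hr (show 0 < m+1 by omega)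
        have hpe1 : p (e (s*(m+1))) = u s := by simpa using hpe hs (show 0 < m+1 by omega)
        rcases hx with rfl | rfl | rfl | rfl
        · exact ⟨e (r*(m+1)) + e (s*(m+1)),
            Or.inr ⟨_, _, horder, hb1, Or.inl rfl⟩, by rw [hpadd, hpe0, hpe1]⟩
        · exact ⟨e (r*(m+1)) - e (s*(m+1)),
            Or.inr ⟨_, _, horder, hb1, Or.inr (Or.inl rfl)⟩, by rw [hpsub, hpe0, hpe1]⟩
        · exact ⟨-e (r*(m+1)) + e (s*(m+1)),
            Or.inr ⟨_, _, horder, hb1, Or.inr (Or.inr (Or.inl rfl))⟩,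
            by rw [hpadd, hpneg, hpe0, hpe1]⟩
        · exact ⟨-e (r*(m+1)) - e (s*(m+1)),
            Or.inr ⟨_, _, horder, hb1, Or.inr (Or.inr (Or.inr rfl))⟩,
            by rw [hpsub, hpneg, hpe0, hpe1]⟩
    · -- nonzero
      rcases hx with ⟨r, hr, hx⟩ | ⟨r, s, hrs, hs, hx⟩
      · refine hnz r hr x ?_
        rcases hx with rfl | rfl | rfl | rfl
        · rw [huu hr hr, if_pos rfl]; exact hc0
        · rw [inner_neg_left, huu hr hr, if_pos rfl]; exact neg_ne_zero.mpr hc0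
        · rw [real_inner_smul_left, huu hr hr, if_pos rfl]
          exact mul_ne_zero two_ne_zero hc0
        · rw [inner_neg_left, real_inner_smul_left, huu hr hr, if_pos rfl]
          exact neg_ne_zero.mpr (mul_ne_zero two_ne_zero hc0)
      · have hr : r < d := lt_trans hrs hs
        have hne : r ≠ s := Nat.ne_of_lt hrs
        have hur : u r ≠ 0 := fun h0 => hc0 (by
          have := huu hr hr; rw [h0, inner_zero_left, if_pos rfl] at this; exact this.symm)
        refine hnz r hr x ?_
        rcases hx with rfl | rfl | rfl | rfl <;>
          simp [inner_add_left, inner_sub_left, inner_neg_left, huu hr hr, huu hs hr,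
            hne, Ne.symm hne, hc0, hur]
  · -- closure under reflections
    have key : ∀ x ∈ BC, ∃ σ : ℕ → ℕ, ∃ ε : ℕ → ℝ,
        (∀ t t', t < d → t' < d → σ t = σ t' → t = t') ∧
        (∀ t, t < d → σ t < d ∧ (ε t = 1 ∨ ε t = -1) ∧
          u t - (2 * ⟪u t, x⟫ / ⟪x, x⟫) • x = ε t • u (σ t)) := by
      intro x hx
      rw [hBC] at hx
      rcases hx with ⟨r, hr, hx⟩ | ⟨r, s, hrs, hs, hx⟩
      · obtain ⟨a, ha, hxa⟩ : ∃ a : ℝ, a ≠ 0 ∧ x = a • u r := by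
          rcases hx with rfl | rfl | rfl | rfl
          exacts [⟨1, one_ne_zero, (one_smul ℝ _).symm⟩, ⟨-1, by norm_num, by module⟩,
            ⟨2, two_ne_zero, rfl⟩, ⟨-2, by norm_num, by module⟩]
        subst hxa
        have hxx : ⟪a • u r, a • u r⟫ = a * a * c := by
          rw [real_inner_smul_left, real_inner_smul_right, huu hr hr, if_pos rfl]; ring
        refine ⟨fun t => t, fun t => if t = r then -1 else 1,
          fun t t' _ _ h => h, fun t ht => ?_⟩
        dsimp only
        refine ⟨ht, by split_ifs <;> simp, ?_⟩
        by_cases htr : t = r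
        · rw [htr, hxx]
          have hq : ⟪u r, a • u r⟫ = a * c := by
            rw [real_inner_smul_right, huu hr hr, if_pos rfl]
          rw [hq]
          have hq2 : 2 * (a * c) / (a * a * c) = 2 / a := by
            field_simp
          rw [hq2, if_pos rfl, smul_smul, div_mul_cancel₀ (2:ℝ) ha]
          module
        · have hq : ⟪u t, a • u r⟫ = 0 := by
            rw [real_inner_smul_right, huu ht hr, if_neg htr, mul_zero]
          rw [hq, if_neg htr, mul_zero, zero_div, zero_smul, sub_zero, one_smul]
      · have hr : r < d := lt_trans hrs hs
        have hrsne : r ≠ s := Nat.ne_of_lt hrs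
        obtain ⟨a, b, ha, hb, hxa⟩ : ∃ a b : ℝ, (a = 1 ∨ a = -1) ∧ (b = 1 ∨ b = -1) ∧
            x = a • u r + b • u s := by
          rcases hx with rfl | rfl | rfl | rfl
          exacts [⟨1, 1, Or.inl rfl, Or.inl rfl, by module⟩,
            ⟨1, -1, Or.inl rfl, Or.inr rfl, by module⟩,
            ⟨-1, 1, Or.inr rfl, Or.inl rfl, by module⟩,
            ⟨-1, -1, Or.inr rfl, Or.inr rfl, by module⟩]
        subst hxa
        have hxx : ⟪a • u r + b • u s, a • u r + b • u s⟫ = 2 * c := by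
          simp only [inner_add_left, inner_add_right, real_inner_smul_left,
            real_inner_smul_right, huu hr hr, huu hr hs, huu hs hr, huu hs hs,
            if_pos rfl, if_neg hrsne, if_neg (Ne.symm hrsne), if_true, eq_self_iff_true]
          rcases ha with rfl | rfl <;> rcases hb with rfl | rfl <;> ring
        refine ⟨fun t => if t = r then s else if t = s then r else t,
          fun t => if t = r ∨ t = s then -(a*b) else 1, ?_, fun t ht => ?_⟩
        · intro t t' _ _ h
          dsimp only at h
          split_ifs at h <;> omega
        dsimp only
        refine ⟨by split_ifs <;> omega, ?_, ?_⟩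
        · split_ifs
          · rcases ha with rfl | rfl <;> rcases hb with rfl | rfl <;> norm_num
          · exact Or.inl rfl
        by_cases htr : t = r
        · rw [htr, hxx]
          have hq : ⟪u r, a • u r + b • u s⟫ = a * c := by
            rw [inner_add_right, real_inner_smul_right, real_inner_smul_right,
              huu hr hr, huu hr hs, if_pos rfl, if_neg hrsne]
            ring
          rw [hq]
          have hq2 : 2 * (a * c) / (2 * c) = a := by field_simp
          rw [hq2, if_pos rfl, if_pos (Or.inl rfl)]
          rcases ha with rfl | rfl <;> rcases hb with rfl | rfl <;> module
        by_cases hts : t = s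
        · rw [hts, hxx]
          have hq : ⟪u s, a • u r + b • u s⟫ = b * c := by
            rw [inner_add_right, real_inner_smul_right, real_inner_smul_right,
              huu hs hr, huu hs hs, if_pos rfl, if_neg (Ne.symm hrsne)]
            ring
          rw [hq]
          have hq2 : 2 * (b * c) / (2 * c) = b := by field_simp
          rw [hq2, if_neg (Ne.symm hrsne), if_pos rfl, if_pos (Or.inr rfl)]
          rcases ha with rfl | rfl <;> rcases hb with rfl | rfl <;> module
        · have hq : ⟪u t, a • u r + b • u s⟫ = 0 := by
            rw [inner_add_right, real_inner_smul_right, real_inner_smul_right,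
              huu ht hr, huu ht hs, if_neg htr, if_neg hts]
            ring
          rw [hq, if_neg htr, if_neg hts, if_neg (by tauto : ¬(t = r ∨ t = s)),
            mul_zero, zero_div, zero_smul, sub_zero, one_smul]
    intro x hx y hy
    obtain ⟨σ, ε, hinj, hkey⟩ := key x hx
    have base : ∀ t, t < d → u t - (2 * ⟪u t, x⟫ / ⟪x, x⟫) • x = ε t • u (σ t) :=
      fun t ht => (hkey t ht).2.2
    rw [hBC] at hy
    rcases hy with ⟨t, ht, hy⟩ | ⟨t, w, htw, hw, hy⟩
    · obtain ⟨hσt, hεt, -⟩ := hkey t ht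
      rcases hy with rfl | rfl | rfl | rfl
      · rw [base t ht]
        exact mem1 hσt _ hεt
      · have h1 : 2 * ⟪-u t, x⟫ / ⟪x, x⟫ = -(2 * ⟪u t, x⟫ / ⟪x, x⟫) := by
          rw [inner_neg_left]; ring
        rw [h1, show -u t - (-(2 * ⟪u t, x⟫ / ⟪x, x⟫)) • x
            = -(u t - (2 * ⟪u t, x⟫ / ⟪x, x⟫) • x) from by module, base t ht,
          show -(ε t • u (σ t)) = (-(ε t)) • u (σ t) from by module]
        exact mem1 hσt _ (by rcases hεt with h' | h' <;> rw [h'] <;> norm_num)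
      · have h1 : 2 * ⟪(2:ℝ) • u t, x⟫ / ⟪x, x⟫ = 2 * (2 * ⟪u t, x⟫ / ⟪x, x⟫) := by
          rw [real_inner_smul_left]; ring
        rw [h1, show (2:ℝ) • u t - (2 * (2 * ⟪u t, x⟫ / ⟪x, x⟫)) • x
            = (2:ℝ) • (u t - (2 * ⟪u t, x⟫ / ⟪x, x⟫) • x) from by module, base t ht,
          show (2:ℝ) • (ε t • u (σ t)) = ε t • ((2:ℝ) • u (σ t)) from by module]
        exact mem1' hσt _ hεt
      · have h1 : 2 * ⟪-((2:ℝ) • u t), x⟫ / ⟪x, x⟫ = (-2) * (2 * ⟪u t, x⟫ / ⟪x, x⟫) := by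
          rw [inner_neg_left, real_inner_smul_left]; ring
        rw [h1, show -((2:ℝ) • u t) - ((-2) * (2 * ⟪u t, x⟫ / ⟪x, x⟫)) • x
            = (-2 : ℝ) • (u t - (2 * ⟪u t, x⟫ / ⟪x, x⟫) • x) from by module, base t ht,
          show (-2:ℝ) • (ε t • u (σ t)) = (-(ε t)) • ((2:ℝ) • u (σ t)) from by module]
        exact mem1' hσt _ (by rcases hεt with h' | h' <;> rw [h'] <;> norm_num)
    · have ht : t < d := lt_trans htw hw
      obtain ⟨hσt, hεt, -⟩ := hkey t ht
      obtain ⟨hσw, hεw, -⟩ := hkey w hw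
      have hσne : σ t ≠ σ w := fun h => (Nat.ne_of_lt htw) (hinj t w ht hw h)
      rcases hy with rfl | rfl | rfl | rfl
      · have h1 : 2 * ⟪u t + u w, x⟫ / ⟪x, x⟫
            = (2 * ⟪u t, x⟫ / ⟪x, x⟫) + (2 * ⟪u w, x⟫ / ⟪x, x⟫) := by
          rw [inner_add_left]; ring
        rw [h1, show u t + u w - ((2 * ⟪u t, x⟫ / ⟪x, x⟫) + (2 * ⟪u w, x⟫ / ⟪x, x⟫)) • x
            = (u t - (2 * ⟪u t, x⟫ / ⟪x, x⟫) • x) + (u w - (2 * ⟪u w, x⟫ / ⟪x, x⟫) • x)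
            from by module, base t ht, base w hw]
        exact mem2 hσt hσw hσne _ _ hεt hεw
      · have h1 : 2 * ⟪u t - u w, x⟫ / ⟪x, x⟫
            = (2 * ⟪u t, x⟫ / ⟪x, x⟫) - (2 * ⟪u w, x⟫ / ⟪x, x⟫) := by
          rw [inner_sub_left]; ring
        rw [h1, show u t - u w - ((2 * ⟪u t, x⟫ / ⟪x, x⟫) - (2 * ⟪u w, x⟫ / ⟪x, x⟫)) • x
            = (u t - (2 * ⟪u t, x⟫ / ⟪x, x⟫) • x) - (u w - (2 * ⟪u w, x⟫ / ⟪x, x⟫) • x)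
            from by module, base t ht, base w hw,
          show ε t • u (σ t) - ε w • u (σ w) = ε t • u (σ t) + (-(ε w)) • u (σ w)
            from by module]
        exact mem2 hσt hσw hσne _ _ hεt (by rcases hεw with h' | h' <;> rw [h'] <;> norm_num)
      · have h1 : 2 * ⟪-u t + u w, x⟫ / ⟪x, x⟫
            = -(2 * ⟪u t, x⟫ / ⟪x, x⟫) + (2 * ⟪u w, x⟫ / ⟪x, x⟫) := by
          rw [inner_add_left, inner_neg_left]; ring
        rw [h1, show -u t + u w - (-(2 * ⟪u t, x⟫ / ⟪x, x⟫) + (2 * ⟪u w, x⟫ / ⟪x, x⟫)) • x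
            = -(u t - (2 * ⟪u t, x⟫ / ⟪x, x⟫) • x) + (u w - (2 * ⟪u w, x⟫ / ⟪x, x⟫) • x)
            from by module, base t ht, base w hw,
          show -(ε t • u (σ t)) + ε w • u (σ w) = (-(ε t)) • u (σ t) + ε w • u (σ w)
            from by module]
        exact mem2 hσt hσw hσne _ _ (by rcases hεt with h' | h' <;> rw [h'] <;> norm_num) hεw
      · have h1 : 2 * ⟪-u t - u w, x⟫ / ⟪x, x⟫
            = -(2 * ⟪u t, x⟫ / ⟪x, x⟫) - (2 * ⟪u w, x⟫ / ⟪x, x⟫) := by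
          rw [inner_sub_left, inner_neg_left]; ring
        rw [h1, show -u t - u w - (-(2 * ⟪u t, x⟫ / ⟪x, x⟫) - (2 * ⟪u w, x⟫ / ⟪x, x⟫)) • x
            = -(u t - (2 * ⟪u t, x⟫ / ⟪x, x⟫) • x) - (u w - (2 * ⟪u w, x⟫ / ⟪x, x⟫) • x)
            from by module, base t ht, base w hw,
          show -(ε t • u (σ t)) - ε w • u (σ w) = (-(ε t)) • u (σ t) + (-(ε w)) • u (σ w)
            from by module]
        exact mem2 hσt hσw hσne _ _ (by rcases hεt with h' | h' <;> rw [h'] <;> norm_num)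
          (by rcases hεw with h' | h' <;> rw [h'] <;> norm_num)
  · -- integrality
    have coeff : ∀ x ∈ BC, ∀ t, t < d → ∃ z : ℤ, ⟪x, u t⟫ = c * z := by
      intro x hx t ht
      rw [hBC] at hx
      rcases hx with ⟨r, hr, hx⟩ | ⟨r, s, hrs, hs, hx⟩
      · rcases hx with rfl | rfl | rfl | rfl
        · refine ⟨if r = t then 1 else 0, ?_⟩
          rw [huu hr ht]; split_ifs <;> simp
        · refine ⟨if r = t then -1 else 0, ?_⟩
          rw [inner_neg_left, huu hr ht]; split_ifs <;> simp
        · refine ⟨if r = t then 2 else 0, ?_⟩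
          rw [real_inner_smul_left, huu hr ht]; split_ifs <;> simp <;> ring
        · refine ⟨if r = t then -2 else 0, ?_⟩
          rw [inner_neg_left, real_inner_smul_left, huu hr ht]
          split_ifs <;> simp <;> ring
      · have hr : r < d := lt_trans hrs hs
        rcases hx with rfl | rfl | rfl | rfl
        · refine ⟨(if r = t then 1 else 0) + (if s = t then 1 else 0), ?_⟩
          rw [inner_add_left, huu hr ht, huu hs ht]
          split_ifs <;> push_cast <;> ring
        · refine ⟨(if r = t then 1 else 0) - (if s = t then 1 else 0), ?_⟩
          rw [inner_sub_left, huu hr ht, huu hs ht]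
          split_ifs <;> push_cast <;> ring
        · refine ⟨-(if r = t then 1 else 0) + (if s = t then 1 else 0), ?_⟩
          rw [inner_add_left, inner_neg_left, huu hr ht, huu hs ht]
          split_ifs <;> push_cast <;> ring
        · refine ⟨-(if r = t then 1 else 0) - (if s = t then 1 else 0), ?_⟩
          rw [inner_sub_left, inner_neg_left, huu hr ht, huu hs ht]
          split_ifs <;> push_cast <;> ring
    intro x hx y hy
    rw [hBC] at hy
    rcases hy with ⟨t, ht, hy⟩ | ⟨t, w, htw, hw, hy⟩
    · obtain ⟨z, hz⟩ := coeff x hx t ht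
      rcases hy with rfl | rfl | rfl | rfl
      · refine ⟨2*z, ?_⟩
        rw [hz, huu ht ht, if_pos rfl]
        push_cast; field_simp
      · refine ⟨-(2*z), ?_⟩
        rw [inner_neg_right, inner_neg_left, inner_neg_right, neg_neg, hz, huu ht ht, if_pos rfl]
        push_cast; field_simp
      · refine ⟨z, ?_⟩
        rw [real_inner_smul_right, real_inner_smul_left, real_inner_smul_right, hz,
          huu ht ht, if_pos rfl]
        push_cast; field_simp
      · refine ⟨-z, ?_⟩
        rw [inner_neg_right, inner_neg_left, inner_neg_right, neg_neg, real_inner_smul_right,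
          real_inner_smul_left, real_inner_smul_right, hz, huu ht ht, if_pos rfl]
        push_cast; field_simp
    · have ht : t < d := lt_trans htw hw
      have htwne : t ≠ w := Nat.ne_of_lt htw
      obtain ⟨z1, hz1⟩ := coeff x hx t ht
      obtain ⟨z2, hz2⟩ := coeff x hx w hw
      rcases hy with rfl | rfl | rfl | rfl
      · have hyy : ⟪u t + u w, u t + u w⟫ = 2*c := by
          simp only [inner_add_left, inner_add_right, huu ht ht, huu ht hw, huu hw ht,
            huu hw hw, if_pos rfl, if_neg htwne, if_neg (Ne.symm htwne), if_true,
            eq_self_iff_true]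
          ring
        refine ⟨z1 + z2, ?_⟩
        rw [inner_add_right, hz1, hz2, hyy]
        push_cast; field_simp
      · have hyy : ⟪u t - u w, u t - u w⟫ = 2*c := by
          simp only [inner_sub_left, inner_sub_right, huu ht ht, huu ht hw, huu hw ht,
            huu hw hw, if_pos rfl, if_neg htwne, if_neg (Ne.symm htwne), if_true,
            eq_self_iff_true]
          ring
        refine ⟨z1 - z2, ?_⟩
        rw [inner_sub_right, hz1, hz2, hyy]
        push_cast; field_simp
      · have hyy : ⟪-u t + u w, -u t + u w⟫ = 2*c := by
          simp only [inner_add_left, inner_add_right, inner_neg_left, inner_neg_right,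
            huu ht ht, huu ht hw, huu hw ht, huu hw hw, if_pos rfl, if_neg htwne,
            if_neg (Ne.symm htwne), if_true, eq_self_iff_true]
          ring
        refine ⟨-z1 + z2, ?_⟩
        rw [inner_add_right, inner_neg_right, hz1, hz2, hyy]
        push_cast; field_simp
      · have hyy : ⟪-u t - u w, -u t - u w⟫ = 2*c := by
          simp only [inner_sub_left, inner_sub_right, inner_neg_left, inner_neg_right,
            huu ht ht, huu ht hw, huu hw ht, huu hw hw, if_pos rfl, if_neg htwne,
            if_neg (Ne.symm htwne), if_true, eq_self_iff_true]
          ring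
        refine ⟨-z1 - z2, ?_⟩
        rw [inner_sub_right, inner_neg_right, hz1, hz2, hyy]
        push_cast; field_simp
  · -- rank
    have hspan : Submodule.span ℝ BC
        = Submodule.span ℝ (Set.range fun r : Fin d => u ↑r) := by
      apply le_antisymm
      · rw [Submodule.span_le]
        intro x hx
        rw [hBC] at hx
        have humem : ∀ t : ℕ, t < d →
            u t ∈ Submodule.span ℝ (Set.range fun r : Fin d => u ↑r) :=
          fun t ht => Submodule.subset_span ⟨⟨t, ht⟩, rfl⟩
        rcases hx with ⟨r, hr, hx⟩ | ⟨r, s, hrs, hs, hx⟩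
        · rcases hx with rfl | rfl | rfl | rfl
          · exact humem r hr
          · exact Submodule.neg_mem _ (humem r hr)
          · exact Submodule.smul_mem _ _ (humem r hr)
          · exact Submodule.neg_mem _ (Submodule.smul_mem _ _ (humem r hr))
        · have hr : r < d := lt_trans hrs hs
          rcases hx with rfl | rfl | rfl | rfl
          · exact Submodule.add_mem _ (humem r hr) (humem s hs)
          · exact Submodule.sub_mem _ (humem r hr) (humem s hs)
          · exact Submodule.add_mem _ (Submodule.neg_mem _ (humem r hr)) (humem s hs)
          · exact Submodule.sub_mem _ (Submodule.neg_mem _ (humem r hr)) (humem s hs)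
      · rw [Submodule.span_le]
        rintro x ⟨i, rfl⟩
        have h1 := mem1 i.isLt 1 (Or.inl rfl)
        rw [one_smul] at h1
        exact Submodule.subset_span h1
    rw [hspan]
    have hli : LinearIndependent ℝ (fun r : Fin d => u ↑r) := by
      apply linearIndependent_of_ne_zero_of_inner_eq_zero
      · intro i h0
        have h1 := huu i.isLt i.isLt
        rw [h0, inner_zero_left, if_pos rfl] at h1
        exact hc0 h1.symm
      · intro i j hij
        rw [huu i.isLt j.isLt, if_neg (fun h => hij (Fin.ext h))]
    rw [finrank_span_eq_card hli, Fintype.card_fin]
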